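/- Resolvent estimate: let (H,d) be a Hadamard space, h : H → (−∞,∞] a proper convex lower semicontinuous function, λ > 0, x ∈ H, and suppose p ∈ H is a minimizer of the function z ↦ h(z) + (1/(2λ))·d(x,z)². Then for every y ∈ H, h(p) − h(y) ≤ (1/(2λ))·d(x,y)² − (1/(2λ))·d(x,p)² − (1/(2λ))·d(p,y)². -/

import Mathlib

open Filter Topology

/-- A Hadamard space structure on a metric space `H`: a geodesic combination map
`geo x y t = (1-t)x ⊕ ty` satisfying the geodesic axioms and the CAT(0) inequality.
(Completeness is imposed via the `CompleteSpace` instance in the theorems.) -/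
structure Hadamard (H : Type*) [MetricSpace H] : Type _ where
  geo : H → H → ℝ → H
  geo_zero : ∀ x y : H, geo x y 0 = x
  geo_one : ∀ x y : H, geo x y 1 = y
  geo_dist : ∀ x y : H, ∀ s ∈ Set.Icc (0 : ℝ) 1, ∀ t ∈ Set.Icc (0 : ℝ) 1,
    dist (geo x y s) (geo x y t) = |s - t| * dist x y
  cat0 : ∀ z x y : H, ∀ t ∈ Set.Icc (0 : ℝ) 1,
    dist z (geo x y t) ^ 2
      ≤ (1 - t) * dist z x ^ 2 + t * dist z y ^ 2 - t * (1 - t) * dist x y ^ 2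

/-- A function `f : H → (-∞,∞]` is (geodesically) convex if along every geodesic
`t ↦ (1-t)x ⊕ ty` it satisfies the convexity inequality. -/
def GeoConvex {H : Type*} [MetricSpace H] (G : Hadamard H) (f : H → EReal) : Prop :=
  ∀ x y : H, ∀ t ∈ Set.Icc (0 : ℝ) 1,
    f (G.geo x y t) ≤ ((1 - t : ℝ) : EReal) * f x + ((t : ℝ) : EReal) * f y

/-- Resolvent estimate: if `p` minimizes `z ↦ h z + (1/(2λ)) d(x,z)²` for a proper
convex lsc function `h` on a Hadamard space, then for every `y`,
`h p - h y ≤ (1/(2λ)) d(x,y)² - (1/(2λ)) d(x,p)² - (1/(2λ)) d(p,y)²`. -/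
theorem resolvent_estimate
    {H : Type*} [MetricSpace H] [CompleteSpace H] (G : Hadamard H)
    (h : H → EReal) (hh_ne_bot : ∀ x : H, h x ≠ ⊥)
    (hproper : ∃ x : H, h x ≠ ⊤)
    (hconv : GeoConvex G h) (hlsc : LowerSemicontinuous h)
    (lam : ℝ) (hlam : 0 < lam) (x p : H)
    (hp : ∀ z : H,
      h p + ((1 / (2 * lam) * dist x p ^ 2 : ℝ) : EReal)
        ≤ h z + ((1 / (2 * lam) * dist x z ^ 2 : ℝ) : EReal)) :
    ∀ y : H,
      h p - h y
        ≤ ((1 / (2 * lam) * dist x y ^ 2 - 1 / (2 * lam) * dist x p ^ 2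
            - 1 / (2 * lam) * dist p y ^ 2 : ℝ) : EReal) := by

  -- setup
  obtain ⟨z0, hz0⟩ := hproper
  set c : ℝ := 1 / (2 * lam) with hcdef
  have hc : (0:ℝ) < c := by positivity
  have hptop : h p ≠ ⊤ := by
    intro hpt
    have h1 := hp z0
    have hz : h z0 = (((h z0).toReal : ℝ) : EReal) := (EReal.coe_toReal hz0 (hh_ne_bot z0)).symm
    rw [hpt, EReal.top_add_coe, top_le_iff, hz, ← EReal.coe_add] at h1
    exact EReal.coe_ne_top _ h1
  set a : ℝ := (h p).toReal with hadef
  have ha : h p = (a : EReal) := (EReal.coe_toReal hptop (hh_ne_bot p)).symm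
  intro y
  by_cases hytop : h y = ⊤
  · rw [hytop, EReal.sub_top]
    exact bot_le
  set b : ℝ := (h y).toReal with hbdef
  have hb : h y = (b : EReal) := (EReal.coe_toReal hytop (hh_ne_bot y)).symm
  set A : ℝ := dist x p ^ 2 with hA
  set B : ℝ := dist x y ^ 2 with hB
  set C : ℝ := dist p y ^ 2 with hC
  have hCnn : 0 ≤ C := by positivity
  -- key real inequality for each t
  have key : ∀ t ∈ Set.Icc (0:ℝ) 1,
      a + c * A ≤ ((1-t)*a + t*b) + c * ((1-t)*A + t*B - t*(1-t)*C) := by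
    intro t ht
    have h1 := hp (G.geo p y t)
    have h2 := hconv p y t ht
    have h3 := G.cat0 x p y t ht
    have h4 : c * dist x (G.geo p y t) ^ 2 ≤ c * ((1-t)*A + t*B - t*(1-t)*C) := by
      have := mul_le_mul_of_nonneg_left h3 hc.le
      simpa [hA, hB, hC] using this
    have h5 : h (G.geo p y t) ≤ (((1-t)*a + t*b : ℝ) : EReal) := by
      rw [ha, hb] at h2
      calc h (G.geo p y t) ≤ ((1-t : ℝ) : EReal) * (a:EReal) + ((t:ℝ):EReal) * (b:EReal) := h2
        _ = (((1-t)*a + t*b : ℝ) : EReal) := by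
            rw [← EReal.coe_mul, ← EReal.coe_mul, ← EReal.coe_add]
    have h6 : h p + ((c * A : ℝ) : EReal)
        ≤ (((1-t)*a + t*b : ℝ) : EReal) + ((c * ((1-t)*A + t*B - t*(1-t)*C) : ℝ) : EReal) := by
      refine le_trans h1 (add_le_add h5 ?_)
      exact_mod_cast h4
    rw [ha, ← EReal.coe_add, ← EReal.coe_add] at h6
    exact_mod_cast h6
  -- deduce a - b ≤ c * (B - A - C)
  have main : a - b ≤ c * (B - A - C) := by
    by_contra hcon
    push_neg at hcon
    set D : ℝ := a - b - c * (B - A - C) with hD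
    have hDpos : 0 < D := by simp [hD]; linarith
    have hbound : ∀ t ∈ Set.Icc (0:ℝ) 1, t * D ≤ t * t * (c * C) := by
      intro t ht
      have hk := key t ht
      rw [hD]
      nlinarith [hk]
    have h1 := hbound 1 (by norm_num)
    have hcC : 0 < c * C := by nlinarith
    have ht2 : D / (2 * (c * C)) ∈ Set.Icc (0:ℝ) 1 := by
      constructor
      · positivity
      · rw [div_le_one (by positivity)]
        nlinarith
    set t : ℝ := D / (2 * (c * C)) with htdef
    have ht0 : 0 < t := by positivity
    have h2 := hbound t ht2
    have h3 : D ≤ t * (c * C) := by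
      have := le_of_mul_le_mul_left (by linarith [h2] : t * D ≤ t * (t * (c * C))) ht0
      linarith
    have h4 : t * (c * C) = D / 2 := by
      rw [htdef, div_mul_eq_mul_div, mul_div_mul_right _ _ hcC.ne']
    rw [h4] at h3
    linarith
  -- conclude
  rw [ha, hb, ← EReal.coe_sub]
  exact_mod_cast (by linarith : a - b ≤ c * B - c * A - c * C)
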